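/- The cross product of vectors in ℝ³ is a Catalan operation: any two distinct bracketings of the same size induce distinct regular operations on (ℝ³, ×), where × denotes the cross product. (Paper's Proposition 3.5.) -/

import Mathlib

/-- A bracketing of size `n`: a full binary tree with `n` leaves. -/
inductive Bracketing : ℕ → Type
  | leaf : Bracketing 1
  | node : {k l : ℕ} → Bracketing k → Bracketing l → Bracketing (k + l)

/-- The `n`-ary regular operation induced by a bracketing on a magma `(G, op)`. -/
def Bracketing.eval {G : Type*} (op : G → G → G) : {n : ℕ} → Bracketing n → (Fin n → G) → G
  | _, .leaf, v => v 0
  | _, .node P Q, v =>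
      op (Bracketing.eval op P (fun i => v (Fin.castAdd _ i)))
         (Bracketing.eval op Q (fun i => v (Fin.natAdd _ i)))

/-- The associative spectrum: the number of distinct `n`-ary regular operations. -/
noncomputable def assocSpectrum {G : Type*} (op : G → G → G) (n : ℕ) : ℕ :=
  Nat.card {f : (Fin n → G) → G // ∃ B : Bracketing n, f = Bracketing.eval op B}

/-- The depth of the `i`-th leaf of a bracketing. -/
def Bracketing.depth : {n : ℕ} → Bracketing n → Fin n → ℕ
  | _, .leaf, _ => 0
  | _, .node (k := k) P Q, i =>
      if h : (i : ℕ) < k then Bracketing.depth P ⟨i, h⟩ + 1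
      else Bracketing.depth Q ⟨(i : ℕ) - k, by have := i.isLt; omega⟩ + 1

/-- The right depth of the `i`-th leaf of a bracketing. -/
def Bracketing.rdepth : {n : ℕ} → Bracketing n → Fin n → ℕ
  | _, .leaf, _ => 0
  | _, .node (k := k) P Q, i =>
      if h : (i : ℕ) < k then Bracketing.rdepth P ⟨i, h⟩
      else Bracketing.rdepth Q ⟨(i : ℕ) - k, by have := i.isLt; omega⟩ + 1

/-- The left depth of the `i`-th leaf of a bracketing. -/
def Bracketing.ldepth : {n : ℕ} → Bracketing n → Fin n → ℕ
  | _, .leaf, _ => 0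
  | _, .node (k := k) P Q, i =>
      if h : (i : ℕ) < k then Bracketing.ldepth P ⟨i, h⟩ + 1
      else Bracketing.ldepth Q ⟨(i : ℕ) - k, by have := i.isLt; omega⟩

/-- A magma operation is Catalan if distinct bracketings of equal size
    induce distinct regular operations. -/
def IsCatalanOp {G : Type*} (op : G → G → G) : Prop :=
  ∀ (n : ℕ) (B₁ B₂ : Bracketing n), B₁ ≠ B₂ →
    Bracketing.eval op B₁ ≠ Bracketing.eval op B₂

namespace CatalanCross

abbrev V := Fin 3 → ℝ

/-- explicit cross product -/
def cpf (a b : V) : V :=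
  ![a 1 * b 2 - a 2 * b 1, a 2 * b 0 - a 0 * b 2, a 0 * b 1 - a 1 * b 0]

lemma cpf_eq : (fun u v : Fin 3 → ℝ => crossProduct u v) = cpf := by
  funext u v
  rw [cross_apply]; rfl

/-- explicit dot product -/
def dp (a b : V) : ℝ := a 0 * b 0 + a 1 * b 1 + a 2 * b 2

def e₀ : V := ![1,0,0]
def e₁ : V := ![0,1,0]
def e₂ : V := ![0,0,1]

/-- evaluation with ℕ-indexed assignments -/
def evalN : {n : ℕ} → Bracketing n → (ℕ → V) → V
  | _, .leaf, w => w 0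
  | _, .node (k := k) P Q, w => cpf (evalN P w) (evalN Q (fun i => w (i + k)))

lemma evalN_eq {n : ℕ} (B : Bracketing n) (w : ℕ → V) :
    evalN B w = Bracketing.eval cpf B (fun i : Fin n => w i) := by
  induction B generalizing w with
  | leaf => rfl
  | node P Q ihP ihQ =>
      show cpf _ _ = cpf _ _
      rw [ihP, ihQ]
      exact congrArg (cpf _)
        (congrArg _ (funext fun i => congrArg w (Nat.add_comm _ _)))

lemma evalN_congr {n : ℕ} (B : Bracketing n) (w w' : ℕ → V)
    (h : ∀ i, i < n → w i = w' i) : evalN B w = evalN B w' := by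
  induction B generalizing w w' with
  | leaf => exact h 0 one_pos
  | node P Q ihP ihQ =>
      show cpf _ _ = cpf _ _
      rw [ihP _ _ fun i hi => h i (by omega),
        ihQ _ _ fun i hi => h _ (by omega)]

lemma size_pos {n : ℕ} (B : Bracketing n) : 1 ≤ n := by
  induction B with
  | leaf => exact le_refl _
  | node P Q ihP ihQ => omega

lemma cpf_apply0 (a b : V) : cpf a b 0 = a 1 * b 2 - a 2 * b 1 := rfl
lemma cpf_apply1 (a b : V) : cpf a b 1 = a 2 * b 0 - a 0 * b 2 := rfl
lemma cpf_apply2 (a b : V) : cpf a b 2 = a 0 * b 1 - a 1 * b 0 := rfl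

lemma exists_ne_coord {c : V} (hc : c ≠ 0) : c 0 ≠ 0 ∨ c 1 ≠ 0 ∨ c 2 ≠ 0 := by
  by_contra h
  push_neg at h
  exact hc (by funext i; fin_cases i <;> simp [h.1, h.2.1, h.2.2])

lemma vzero_iff {c : V} : c = 0 ↔ (c 0 = 0 ∧ c 1 = 0 ∧ c 2 = 0) := by
  constructor
  · intro h; rw [h]; exact ⟨rfl, rfl, rfl⟩
  · intro h; funext i; fin_cases i <;> simp [h.1, h.2.1, h.2.2]

lemma dp_self_pos {c : V} (hc : c ≠ 0) : 0 < dp c c := by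
  rcases exists_ne_coord hc with h | h | h <;>
    (unfold dp;
     nlinarith [mul_self_nonneg (c 0), mul_self_nonneg (c 1), mul_self_nonneg (c 2),
       mul_self_pos.mpr h])

lemma dp_self_ne {c : V} (hc : c ≠ 0) : dp c c ≠ 0 := (dp_self_pos hc).ne'

lemma cpf_surj (c : V) : ∃ a b : V, cpf a b = c := by
  by_cases h01 : c 0 = 0 ∧ c 1 = 0
  · refine ⟨![0, -(c 2), 0], ![1,0,0], ?_⟩
    funext i; fin_cases i <;> simp [cpf, h01.1, h01.2]
  · have hs : c 0 * c 0 + c 1 * c 1 ≠ 0 := by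
      have hpos : 0 < c 0 * c 0 + c 1 * c 1 := by
        rcases not_and_or.mp h01 with h | h <;>
          nlinarith [mul_self_nonneg (c 0), mul_self_nonneg (c 1), mul_self_pos.mpr h]
      exact hpos.ne'
    refine ⟨(c 0 * c 0 + c 1 * c 1)⁻¹ •
      cpf ![c 1, -(c 0), 0] c, ![c 1, -(c 0), 0], ?_⟩
    funext i; fin_cases i <;>
      · simp [cpf, Pi.smul_apply, smul_eq_mul]
        have hs1 : c 0 ^ 2 + c 1 ^ 2 ≠ 0 := by rw [sq, sq]; exact hs
        have hs2 : c 1 ^ 2 + c 0 ^ 2 ≠ 0 := by rw [add_comm]; exact hs1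
        field_simp
        try ring

lemma dp_cpf_left (a b : V) : dp (cpf a b) a = 0 := by unfold dp cpf; simp; ring

lemma dp_cpf_right (a b : V) : dp (cpf a b) b = 0 := by unfold dp cpf; simp; ring

lemma dp_smul (t : ℝ) (x y : V) : dp (t • x) y = t * dp x y := by
  unfold dp; simp [Pi.smul_apply]; ring

lemma cpf_smul_left (s : ℝ) (a b : V) : cpf (s • a) b = s • cpf a b := by
  funext i; fin_cases i <;> (simp [cpf, Pi.smul_apply]; ring)

lemma cpf_smul_right (s : ℝ) (a b : V) : cpf a (s • b) = s • cpf a b := by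
  funext i; fin_cases i <;> (simp [cpf, Pi.smul_apply]; ring)

lemma cpf_zero_right (a : V) : cpf a 0 = 0 := by
  funext i; fin_cases i <;> simp [cpf]

lemma cpf_zero_left (a : V) : cpf 0 a = 0 := by
  funext i; fin_cases i <;> simp [cpf]

/-- (a₁×w)×(a₂×w) = (dp w (a₁×a₂)) • w -/
lemma cross_cross_right (a₁ a₂ w : V) :
    cpf (cpf a₁ w) (cpf a₂ w) = dp w (cpf a₁ a₂) • w := by
  funext i; fin_cases i <;> (simp [cpf, dp, Pi.smul_apply]; ring)

/-- (a×b₁)×(a×b₂) = (dp a (b₁×b₂)) • a -/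
lemma cross_cross_left (a b₁ b₂ : V) :
    cpf (cpf a b₁) (cpf a b₂) = dp a (cpf b₁ b₂) • a := by
  funext i; fin_cases i <;> (simp [cpf, dp, Pi.smul_apply]; ring)

lemma det_perp_zero (p₁ p₂ p₃ d : V) (t : ℝ) :
    Matrix.det (Matrix.of ![t • cpf p₁ d, t • cpf p₂ d, t • cpf p₃ d]) = 0 := by
  rw [Matrix.det_fin_three]
  simp only [Matrix.of_apply, Matrix.cons_val', Matrix.cons_val_zero, Matrix.cons_val_one,
    Matrix.head_cons, Matrix.empty_val', Matrix.cons_val_fin_one, Matrix.head_fin_const,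
    Matrix.cons_val_two, Matrix.tail_cons, Pi.smul_apply, smul_eq_mul]
  simp only [cpf, Matrix.cons_val_zero, Matrix.cons_val_one, Matrix.head_cons,
    Matrix.cons_val_two, Matrix.tail_cons]
  ring

lemma det_good (b₁ b₂ : V) :
    Matrix.det (Matrix.of ![cpf b₁ b₂, cpf (cpf b₁ b₂) b₁, cpf (cpf b₁ b₂) b₂]) =
      dp (cpf b₁ b₂) (cpf b₁ b₂) ^ 2 := by
  rw [Matrix.det_fin_three]
  simp only [Matrix.of_apply, Matrix.cons_val', Matrix.cons_val_zero, Matrix.cons_val_one,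
    Matrix.head_cons, Matrix.empty_val', Matrix.cons_val_fin_one, Matrix.head_fin_const,
    Matrix.cons_val_two, Matrix.tail_cons]
  simp only [cpf, dp, Matrix.cons_val_zero, Matrix.cons_val_one, Matrix.head_cons,
    Matrix.cons_val_two, Matrix.tail_cons]
  ring

/-- from dots with basis on the right of a cross -/
lemma cpf_eq_zero_of_dp_basis (p q : V)
    (h0 : dp (cpf p e₀) q = 0) (h1 : dp (cpf p e₁) q = 0) (h2 : dp (cpf p e₂) q = 0) :
    cpf p q = 0 := by
  simp only [dp, cpf, e₀, e₁, e₂, Matrix.cons_val_zero, Matrix.cons_val_one, Matrix.head_cons,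
    Matrix.cons_val_two, Matrix.tail_cons] at h0 h1 h2 ⊢
  funext i; fin_cases i <;> simp <;> nlinarith [h0, h1, h2]

lemma cpf_eq_zero_of_dp_basis' (p q : V)
    (h0 : dp (cpf e₀ p) q = 0) (h1 : dp (cpf e₁ p) q = 0) (h2 : dp (cpf e₂ p) q = 0) :
    cpf p q = 0 := by
  simp only [dp, cpf, e₀, e₁, e₂, Matrix.cons_val_zero, Matrix.cons_val_one, Matrix.head_cons,
    Matrix.cons_val_two, Matrix.tail_cons] at h0 h1 h2 ⊢
  funext i; fin_cases i <;> simp <;> nlinarith [h0, h1, h2]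

lemma eq_zero_of_cpf_basis_left {q : V} (h0 : cpf e₀ q = 0) (h1 : cpf e₁ q = 0) : q = 0 := by
  rw [vzero_iff] at h0 h1 ⊢
  simp only [cpf, e₀, e₁, Matrix.cons_val_zero, Matrix.cons_val_one, Matrix.head_cons,
    Matrix.cons_val_two, Matrix.tail_cons] at h0 h1
  refine ⟨?_, ?_, ?_⟩ <;> nlinarith [h0.1, h0.2.1, h0.2.2, h1.1, h1.2.1, h1.2.2]

lemma eq_zero_of_cpf_basis_right {q : V} (h0 : cpf q e₀ = 0) (h1 : cpf q e₁ = 0) : q = 0 := by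
  rw [vzero_iff] at h0 h1 ⊢
  simp only [cpf, e₀, e₁, Matrix.cons_val_zero, Matrix.cons_val_one, Matrix.head_cons,
    Matrix.cons_val_two, Matrix.tail_cons] at h0 h1
  refine ⟨?_, ?_, ?_⟩ <;> nlinarith [h0.1, h0.2.1, h0.2.2, h1.1, h1.2.1, h1.2.2]

lemma exists_basis_cpf_left_ne {q : V} (hq : q ≠ 0) : cpf e₀ q ≠ 0 ∨ cpf e₁ q ≠ 0 := by
  by_contra h
  push_neg at h
  exact hq (eq_zero_of_cpf_basis_left h.1 h.2)

lemma exists_basis_cpf_right_ne {q : V} (hq : q ≠ 0) : cpf q e₀ ≠ 0 ∨ cpf q e₁ ≠ 0 := by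
  by_contra h
  push_neg at h
  exact hq (eq_zero_of_cpf_basis_right h.1 h.2)

lemma parallel_of_cpf_zero {p q : V} (h : cpf p q = 0) (hq : q ≠ 0) : ∃ s : ℝ, p = s • q := by
  rw [vzero_iff] at h
  simp only [cpf, Matrix.cons_val_zero, Matrix.cons_val_one, Matrix.head_cons,
    Matrix.cons_val_two, Matrix.tail_cons] at h
  obtain ⟨h0, h1, h2⟩ := h
  rcases exists_ne_coord hq with hi | hi | hi
  · refine ⟨p 0 / q 0, ?_⟩
    funext j; fin_cases j <;> (simp [Pi.smul_apply, smul_eq_mul]; try field_simp; try nlinarith)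
  · refine ⟨p 1 / q 1, ?_⟩
    funext j; fin_cases j <;> (simp [Pi.smul_apply, smul_eq_mul]; try field_simp; try nlinarith)
  · refine ⟨p 2 / q 2, ?_⟩
    funext j; fin_cases j <;> (simp [Pi.smul_apply, smul_eq_mul]; try field_simp; try nlinarith)

lemma smul_id_one_aux {s x : ℝ} (hx : x ≠ 0) (h : s * x = x) : s = 1 := by
  exact mul_right_cancel₀ hx (by rw [one_mul]; exact h)

lemma smul_id_one {c : V} {s : ℝ} (hc : c ≠ 0) (h : s • c = c) : s = 1 := by
  rcases exists_ne_coord hc with hi | hi | hi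
  · exact smul_id_one_aux hi (by simpa [Pi.smul_apply] using congrFun h 0)
  · exact smul_id_one_aux hi (by simpa [Pi.smul_apply] using congrFun h 1)
  · exact smul_id_one_aux hi (by simpa [Pi.smul_apply] using congrFun h 2)

lemma e₀_ne : e₀ ≠ (0 : V) := by
  intro h; have := congrFun h 0; simpa [e₀] using this
lemma e₁_ne : e₁ ≠ (0 : V) := by
  intro h; have := congrFun h 1; simpa [e₁] using this
lemma e₂_ne : e₂ ≠ (0 : V) := by
  intro h; have := congrFun h 2; simpa [e₂] using this

lemma cpf_e01 : cpf e₀ e₁ = e₂ := by funext i; fin_cases i <;> simp [cpf, e₀, e₁, e₂]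
lemma cpf_e02 : cpf e₀ e₂ = -e₁ := by funext i; fin_cases i <;> simp [cpf, e₀, e₁, e₂]
lemma cpf_e10 : cpf e₁ e₀ = -e₂ := by funext i; fin_cases i <;> simp [cpf, e₀, e₁, e₂]
lemma cpf_e12 : cpf e₁ e₂ = e₀ := by funext i; fin_cases i <;> simp [cpf, e₀, e₁, e₂]
lemma cpf_e21 : cpf e₂ e₁ = -e₀ := by funext i; fin_cases i <;> simp [cpf, e₀, e₁, e₂]

lemma cpf_e01_ne : cpf e₀ e₁ ≠ 0 := by rw [cpf_e01]; exact e₂_ne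
lemma cpf_e02_ne : cpf e₀ e₂ ≠ 0 := by rw [cpf_e02]; simpa using e₁_ne
lemma cpf_e10_ne : cpf e₁ e₀ ≠ 0 := by rw [cpf_e10]; simpa using e₂_ne
lemma cpf_e12_ne : cpf e₁ e₂ ≠ 0 := by rw [cpf_e12]; exact e₀_ne
lemma cpf_e21_ne : cpf e₂ e₁ ≠ 0 := by rw [cpf_e21]; simpa using e₀_ne


def comb (k : ℕ) (u v : ℕ → V) : ℕ → V := fun i => if i < k then u i else v (i - k)

lemma evalN_node {k l : ℕ} (P : Bracketing k) (Q : Bracketing l) (w : ℕ → V) :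
    evalN (Bracketing.node P Q) w = cpf (evalN P w) (evalN Q (fun i => w (i + k))) := rfl

lemma evalN_comb_left {k l : ℕ} (P : Bracketing k) (Q : Bracketing l) (u v : ℕ → V) :
    evalN (Bracketing.node P Q) (comb k u v) = cpf (evalN P u) (evalN Q v) := by
  rw [evalN_node,
    evalN_congr P (comb k u v) u (fun i hi => by simp [comb, hi]),
    evalN_congr Q (fun i => comb k u v (i + k)) v (fun i hi => by
      simp only [comb]
      rw [if_neg (by omega), Nat.add_sub_cancel])]

lemma surjN : ∀ {n : ℕ} (B : Bracketing n) (c : V), ∃ w, evalN B w = c := by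
  intro n B
  induction B with
  | leaf => exact fun c => ⟨fun _ => c, rfl⟩
  | node P Q ihP ihQ =>
      intro c
      obtain ⟨a, b, hab⟩ := cpf_surj c
      obtain ⟨u, hu⟩ := ihP a
      obtain ⟨v, hv⟩ := ihQ b
      exact ⟨comb _ u v, by rw [evalN_comb_left, hu, hv, hab]⟩

lemma nondeg : ∀ {l : ℕ} (Q : Bracketing l) (j : ℕ), 1 ≤ j → j < l →
    ∃ w₁ w₂ : ℕ → V, (∀ i, j ≤ i → w₁ i = w₂ i) ∧
      cpf (evalN Q w₁) (evalN Q w₂) ≠ 0 := by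
  intro l Q
  induction Q with
  | leaf => intro j h1 h2; omega
  | node Q₁ Q₂ ih₁ ih₂ =>
      rename_i k₁ l₁
      intro j hj1 hjl
      rcases lt_trichotomy j k₁ with hlt | heq | hgt
      · obtain ⟨w₁, w₂, hagree, hne⟩ := ih₁ j hj1 hlt
        set a₁ := evalN Q₁ w₁
        set a₂ := evalN Q₁ w₂
        obtain ⟨vc, hvc⟩ := surjN Q₂ (cpf a₁ a₂)
        refine ⟨comb k₁ w₁ vc, comb k₁ w₂ vc, ?_, ?_⟩
        · intro i hi
          by_cases h : i < k₁
          · simp [comb, h, hagree i hi]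
          · simp [comb, h]
        · rw [evalN_comb_left, evalN_comb_left, hvc, cross_cross_right]
          exact smul_ne_zero (dp_self_ne hne) hne
      · obtain ⟨u₁, hu₁⟩ := surjN Q₁ e₀
        obtain ⟨u₂, hu₂⟩ := surjN Q₁ e₁
        obtain ⟨vb, hvb⟩ := surjN Q₂ e₂
        refine ⟨comb k₁ u₁ vb, comb k₁ u₂ vb, ?_, ?_⟩
        · intro i hi
          have h : ¬ i < k₁ := by omega
          simp [comb, h]
        · rw [evalN_comb_left, evalN_comb_left, hu₁, hu₂, hvb, cross_cross_right, cpf_e01]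
          have : dp e₂ e₂ = 1 := by simp [dp, e₂]
          rw [this, one_smul]
          exact e₂_ne
      · obtain ⟨v₁, v₂, hagree, hne⟩ := ih₂ (j - k₁) (by omega) (by omega)
        set b₁ := evalN Q₂ v₁
        set b₂ := evalN Q₂ v₂
        obtain ⟨ua, hua⟩ := surjN Q₁ (cpf b₁ b₂)
        refine ⟨comb k₁ ua v₁, comb k₁ ua v₂, ?_, ?_⟩
        · intro i hi
          by_cases h : i < k₁
          · simp [comb, h]
          · simp [comb, h, hagree (i - k₁) (by omega)]
        · rw [evalN_comb_left, evalN_comb_left, hua, cross_cross_left]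
          exact smul_ne_zero (dp_self_ne hne) hne

lemma no_lt {k l k' l' : ℕ} (P : Bracketing k) (Q : Bracketing l)
    (P' : Bracketing k') (Q' : Bracketing l') (t : ℝ)
    (hn : k + l = k' + l') (hkk : k < k')
    (h : ∀ w, evalN (Bracketing.node P Q) w = t • evalN (Bracketing.node P' Q') w) :
    False := by
  have hl' : 1 ≤ l' := size_pos Q'
  obtain ⟨w₁, w₂, hagree, hne⟩ := nondeg Q (k' - k) (by omega) (by omega)
  obtain ⟨u₁, hu₁⟩ := surjN P (evalN Q w₁)
  obtain ⟨u₂, hu₂⟩ := surjN P (cpf (evalN Q w₁) (evalN Q w₂))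
  -- the three rows on the B₂-side share the same tail value d
  set d := evalN Q' (fun i => w₂ (i + (k' - k))) with hd
  have hrow : ∀ v : ℕ → V, (∀ i, (k' - k) ≤ i → v i = w₂ i) → ∀ u : ℕ → V,
      evalN (Bracketing.node P' Q') (comb k u v) =
        cpf (evalN P' (comb k u v)) d := by
    intro v hv u
    rw [evalN_node]
    refine congrArg (cpf _) ?_
    rw [hd]
    apply evalN_congr
    intro i _
    simp only [comb]
    rw [if_neg (by omega)]
    rw [show i + k' - k = i + (k' - k) by omega]
    exact hv _ (by omega)
  have hr1 := h (comb k u₁ w₂)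
  have hr2 := h (comb k u₂ w₁)
  have hr3 := h (comb k u₂ w₂)
  rw [evalN_comb_left, hu₁, hrow w₂ (fun i _ => rfl)] at hr1
  rw [evalN_comb_left, hu₂, hrow w₁ hagree] at hr2
  rw [evalN_comb_left, hu₂, hrow w₂ (fun i _ => rfl)] at hr3
  have hdet : Matrix.det (Matrix.of
      ![t • cpf (evalN P' (comb k u₁ w₂)) d,
        t • cpf (evalN P' (comb k u₂ w₁)) d,
        t • cpf (evalN P' (comb k u₂ w₂)) d]) = 0 :=
    det_perp_zero _ _ _ d t
  rw [← hr1, ← hr2, ← hr3, det_good] at hdet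
  exact pow_ne_zero 2 (dp_self_ne hne) hdet

lemma node_surj : ∀ {n : ℕ} (B : Bracketing n),
    (n = 1 ∧ HEq B Bracketing.leaf) ∨
      ∃ k l, ∃ (P : Bracketing k) (Q : Bracketing l),
        k + l = n ∧ HEq B (Bracketing.node P Q) := by
  intro n B
  cases B with
  | leaf => exact Or.inl ⟨rfl, HEq.rfl⟩
  | node P Q => exact Or.inr ⟨_, _, P, Q, rfl, HEq.rfl⟩

lemma evalN_heq {m n : ℕ} (h : m = n) (B : Bracketing m) (B' : Bracketing n)
    (hh : HEq B B') : evalN B = evalN B' := by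
  subst h
  rw [eq_of_heq hh]

lemma main_ind : ∀ n : ℕ, ∀ (B₁ B₂ : Bracketing n) (t : ℝ), t ≠ 0 →
    (∀ w, evalN B₁ w = t • evalN B₂ w) → B₁ = B₂ ∧ t = 1 := by
  intro n
  induction n using Nat.strong_induction_on with
  | _ n IH =>
  intro B₁ B₂ t ht hE
  cases B₁ with
  | leaf =>
    rcases node_surj B₂ with ⟨-, hB⟩ | ⟨k', l', P', Q', hkl, -⟩
    · have hB2 : B₂ = Bracketing.leaf := eq_of_heq hB
      subst hB2
      refine ⟨rfl, ?_⟩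
      have := congrFun (hE (fun _ => e₀)) 0
      simp only [evalN, Pi.smul_apply, smul_eq_mul, e₀] at this
      simpa using this.symm
    · have h1 := size_pos P'
      have h2 := size_pos Q'
      omega
  | node P Q =>
    rename_i k l
    have hkpos := size_pos P
    have hlpos := size_pos Q
    rcases node_surj B₂ with ⟨h1, -⟩ | ⟨k', l', P', Q', hkl, hB⟩
    · omega
    · have hev : evalN B₂ = evalN (Bracketing.node P' Q') :=
        evalN_heq hkl.symm _ _ (heq_of_heq_of_eq hB rfl)
      rw [hev] at hE
      -- step 1 : k = k'
      have hk : k = k' := by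
        by_contra hne
        rcases Nat.lt_or_ge k k' with hlt | hge
        · exact no_lt P Q P' Q' t hkl.symm hlt hE
        · have hlt : k' < k := by omega
          refine no_lt P' Q' P Q t⁻¹ hkl hlt (fun w => ?_)
          rw [hE w, smul_smul, inv_mul_cancel₀ ht, one_smul]
      subst hk
      have hl : l = l' := by omega
      subst hl
      have hB2 : B₂ = Bracketing.node P' Q' := eq_of_heq hB
      subst hB2
      -- step 2 : separate the two sides
      have H : ∀ u v : ℕ → V, cpf (evalN P u) (evalN Q v) =
          t • cpf (evalN P' u) (evalN Q' v) := by
        intro u v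
        have := hE (comb k u v)
        rwa [evalN_comb_left, evalN_comb_left] at this
      -- cross-parallelism
      have hgg' : ∀ u, cpf (evalN P' u) (evalN P u) = 0 := by
        intro u
        have hdp : ∀ e : V, (∃ v, evalN Q' v = e) →
            dp (cpf (evalN P' u) e) (evalN P u) = 0 := by
          rintro e ⟨v, hv⟩
          have h1 : dp (cpf (evalN P u) (evalN Q v)) (evalN P u) = 0 := dp_cpf_left _ _
          rw [H u v, dp_smul] at h1
          have h2 := (mul_eq_zero.mp h1).resolve_left ht
          rwa [hv] at h2
        exact cpf_eq_zero_of_dp_basis _ _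
          (hdp e₀ (surjN Q' e₀)) (hdp e₁ (surjN Q' e₁)) (hdp e₂ (surjN Q' e₂))
      have hhh' : ∀ v, cpf (evalN Q' v) (evalN Q v) = 0 := by
        intro v
        have hdp : ∀ e : V, (∃ u, evalN P' u = e) →
            dp (cpf e (evalN Q' v)) (evalN Q v) = 0 := by
          rintro e ⟨u, hu⟩
          have h1 : dp (cpf (evalN P u) (evalN Q v)) (evalN Q v) = 0 := dp_cpf_right _ _
          rw [H u v, dp_smul] at h1
          have h2 := (mul_eq_zero.mp h1).resolve_left ht
          rwa [hu] at h2
        exact cpf_eq_zero_of_dp_basis' _ _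
          (hdp e₀ (surjN P' e₀)) (hdp e₁ (surjN P' e₁)) (hdp e₂ (surjN P' e₂))
      -- zero transfer
      have hPzero : ∀ u, evalN P u = 0 → evalN P' u = 0 := by
        intro u hu
        have hz : ∀ e : V, (∃ v, evalN Q' v = e) → cpf (evalN P' u) e = 0 := by
          rintro e ⟨v, hv⟩
          have h1 := H u v
          rw [hu, cpf_zero_left] at h1
          have h2 := (smul_eq_zero.mp h1.symm).resolve_left ht
          rwa [hv] at h2
        exact eq_zero_of_cpf_basis_right (hz e₀ (surjN Q' e₀)) (hz e₁ (surjN Q' e₁))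
      have hQzero : ∀ v, evalN Q v = 0 → evalN Q' v = 0 := by
        intro v hv
        have hz : ∀ e : V, (∃ u, evalN P' u = e) → cpf e (evalN Q' v) = 0 := by
          rintro e ⟨u, hu⟩
          have h1 := H u v
          rw [hv, cpf_zero_right] at h1
          have h2 := (smul_eq_zero.mp h1.symm).resolve_left ht
          rwa [hu] at h2
        exact eq_zero_of_cpf_basis_left (hz e₀ (surjN P' e₀)) (hz e₁ (surjN P' e₁))
      -- basis witnesses
      obtain ⟨up0, hup0⟩ := surjN P e₀
      obtain ⟨up1, hup1⟩ := surjN P e₁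
      obtain ⟨up2, hup2⟩ := surjN P e₂
      obtain ⟨vq0, hvq0⟩ := surjN Q e₀
      obtain ⟨vq1, hvq1⟩ := surjN Q e₁
      obtain ⟨vq2, hvq2⟩ := surjN Q e₂
      obtain ⟨ν₀, hν₀⟩ := parallel_of_cpf_zero (show cpf (evalN P' up0) e₀ = 0 by rw [← hup0]; exact hgg' up0) e₀_ne
      obtain ⟨ν₁, hν₁⟩ := parallel_of_cpf_zero (show cpf (evalN P' up1) e₁ = 0 by rw [← hup1]; exact hgg' up1) e₁_ne
      obtain ⟨ν₂, hν₂⟩ := parallel_of_cpf_zero (show cpf (evalN P' up2) e₂ = 0 by rw [← hup2]; exact hgg' up2) e₂_ne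
      obtain ⟨μ₀, hμ₀⟩ := parallel_of_cpf_zero (show cpf (evalN Q' vq0) e₀ = 0 by rw [← hvq0]; exact hhh' vq0) e₀_ne
      obtain ⟨μ₁, hμ₁⟩ := parallel_of_cpf_zero (show cpf (evalN Q' vq1) e₁ = 0 by rw [← hvq1]; exact hhh' vq1) e₁_ne
      obtain ⟨μ₂, hμ₂⟩ := parallel_of_cpf_zero (show cpf (evalN Q' vq2) e₂ = 0 by rw [← hvq2]; exact hhh' vq2) e₂_ne
      -- key scalar relation
      have key : ∀ (ui vj : ℕ → V) (a b : V) (s r : ℝ),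
          evalN P ui = a → evalN Q vj = b →
          evalN P' ui = s • a → evalN Q' vj = r • b →
          cpf a b ≠ 0 → t * s * r = 1 := by
        intro ui vj a b s r hA hB' hA' hB'' hab
        have h1 := H ui vj
        rw [hA, hB', hA', hB'', cpf_smul_left, cpf_smul_right, smul_smul,
          smul_smul] at h1
        have h2 := smul_id_one hab h1.symm
        linarith [h2, mul_assoc (t * s) r (1:ℝ)]
      have rel01 : t * ν₀ * μ₁ = 1 := key up0 vq1 e₀ e₁ ν₀ μ₁ hup0 hvq1 hν₀ hμ₁ cpf_e01_ne
      have rel02 : t * ν₀ * μ₂ = 1 := key up0 vq2 e₀ e₂ ν₀ μ₂ hup0 hvq2 hν₀ hμ₂ cpf_e02_ne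
      have rel10 : t * ν₁ * μ₀ = 1 := key up1 vq0 e₁ e₀ ν₁ μ₀ hup1 hvq0 hν₁ hμ₀ cpf_e10_ne
      have rel12 : t * ν₁ * μ₂ = 1 := key up1 vq2 e₁ e₂ ν₁ μ₂ hup1 hvq2 hν₁ hμ₂ cpf_e12_ne
      have rel21 : t * ν₂ * μ₁ = 1 := key up2 vq1 e₂ e₁ ν₂ μ₁ hup2 hvq1 hν₂ hμ₁ cpf_e21_ne
      have htν₀ : t * ν₀ ≠ 0 := fun hz => by rw [hz, zero_mul] at rel01; exact one_ne_zero rel01.symm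
      have htν₁ : t * ν₁ ≠ 0 := fun hz => by rw [hz, zero_mul] at rel10; exact one_ne_zero rel10.symm
      have htμ₀ : t * μ₀ ≠ 0 := fun hz => by
        have : t * ν₁ * μ₀ = ν₁ * (t * μ₀) := by ring
        rw [this, hz, mul_zero] at rel10; exact one_ne_zero rel10.symm
      have htμ₁ : t * μ₁ ≠ 0 := fun hz => by
        have : t * ν₀ * μ₁ = ν₀ * (t * μ₁) := by ring
        rw [this, hz, mul_zero] at rel01; exact one_ne_zero rel01.symm
      have htμ₂ : t * μ₂ ≠ 0 := fun hz => by
        have : t * ν₀ * μ₂ = ν₀ * (t * μ₂) := by ring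
        rw [this, hz, mul_zero] at rel02; exact one_ne_zero rel02.symm
      have hμ12 : μ₁ = μ₂ := by
        apply mul_left_cancel₀ htν₀
        linarith [rel01, rel02]
      have hμ02 : μ₀ = μ₂ := by
        apply mul_left_cancel₀ htν₁
        linarith [rel10, rel12]
      have hν01 : ν₀ = ν₁ := by
        apply mul_right_cancel₀ htμ₂
        have e1 : ν₀ * (t * μ₂) = t * ν₀ * μ₂ := by ring
        have e2 : ν₁ * (t * μ₂) = t * ν₁ * μ₂ := by ring
        rw [e1, e2, rel02, rel12]
      have hν02 : ν₀ = ν₂ := by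
        apply mul_right_cancel₀ htμ₁
        have e1 : ν₀ * (t * μ₁) = t * ν₀ * μ₁ := by ring
        have e2 : ν₂ * (t * μ₁) = t * ν₂ * μ₁ := by ring
        rw [e1, e2, rel01, rel21]
      -- global proportionality for Q
      have hQmu : ∀ v, evalN Q' v = μ₀ • evalN Q v := by
        intro v
        by_cases hq : evalN Q v = 0
        · rw [hQzero v hq, hq, smul_zero]
        · obtain ⟨s, hs⟩ := parallel_of_cpf_zero (hhh' v) hq
          rcases exists_basis_cpf_left_ne hq with hi | hi
          · have hrel := key up0 v e₀ (evalN Q v) ν₀ s hup0 rfl hν₀ hs hi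
            have hsval : s = μ₁ := by
              apply mul_left_cancel₀ htν₀
              linarith [hrel, rel01]
            rw [hs, hsval, hμ12, ← hμ02]
          · have hrel := key up1 v e₁ (evalN Q v) ν₁ s hup1 rfl hν₁ hs hi
            have hsval : s = μ₀ := by
              apply mul_left_cancel₀ htν₁
              linarith [hrel, rel10]
            rw [hs, hsval]
      -- global proportionality for P
      have hPnu : ∀ u, evalN P' u = ν₀ • evalN P u := by
        intro u
        by_cases hp : evalN P u = 0
        · rw [hPzero u hp, hp, smul_zero]
        · obtain ⟨s, hs⟩ := parallel_of_cpf_zero (hgg' u) hp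
          rcases exists_basis_cpf_right_ne hp with hj | hj
          · have hrel := key u vq0 (evalN P u) e₀ s μ₀ rfl hvq0 hs hμ₀ hj
            have hsval : s = ν₁ := by
              apply mul_right_cancel₀ htμ₀
              have e1 : s * (t * μ₀) = t * s * μ₀ := by ring
              have e2 : ν₁ * (t * μ₀) = t * ν₁ * μ₀ := by ring
              rw [e1, e2, hrel, rel10]
            rw [hs, hsval, ← hν01]
          · have hrel := key u vq1 (evalN P u) e₁ s μ₁ rfl hvq1 hs hμ₁ hj
            have hsval : s = ν₀ := by
              apply mul_right_cancel₀ htμ₁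
              have e1 : s * (t * μ₁) = t * s * μ₁ := by ring
              have e2 : ν₀ * (t * μ₁) = t * ν₀ * μ₁ := by ring
              rw [e1, e2, hrel, rel01]
            rw [hs, hsval]
      -- apply induction hypotheses
      have hμ₀ne : μ₀ ≠ 0 := fun hz => by
        rw [hz, mul_zero] at rel10; exact one_ne_zero rel10.symm
      have hν₀ne : ν₀ ≠ 0 := fun hz => by
        have : t * ν₀ * μ₁ = 0 := by rw [hz]; ring
        rw [this] at rel01; exact zero_ne_one rel01
      obtain ⟨hQQ, hμ1⟩ := IH l (by omega) Q' Q μ₀ hμ₀ne hQmu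
      obtain ⟨hPP, hν1⟩ := IH k (by omega) P' P ν₀ hν₀ne hPnu
      refine ⟨?_, ?_⟩
      · rw [hPP, hQQ]
      · have : t * ν₀ * μ₁ = t := by rw [hν1, hμ12, ← hμ02, hμ1]; ring
        linarith [rel01, this]

end CatalanCross

/-- Paper's Proposition 3.5: the cross product of vectors in `ℝ³` is Catalan. -/
theorem stmt10 :
    IsCatalanOp (fun u v : Fin 3 → ℝ => crossProduct u v) := by
  intro n B₁ B₂ hne hEq
  apply hne
  rw [show (fun u v : Fin 3 → ℝ => crossProduct u v) = CatalanCross.cpf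
    from CatalanCross.cpf_eq] at hEq
  have hN : ∀ w : ℕ → CatalanCross.V,
      CatalanCross.evalN B₁ w = (1:ℝ) • CatalanCross.evalN B₂ w := by
    intro w
    rw [CatalanCross.evalN_eq, CatalanCross.evalN_eq, hEq, one_smul]
  exact (CatalanCross.main_ind n B₁ B₂ 1 one_ne_zero hN).1
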